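/- arXiv:2504.09884 — 3 statements merged into one kernel-verified Lean document; each statement's English description precedes it below -/
import Mathlib

section
/- The union of an arbitrary family of languages controllable with respect to G is controllable with respect to G; consequently, for any language L, the family C(L) of controllable sublanguages of L contains a unique supremal element sup C(L) = ∪{L' | L' ∈ C(L)}. -/
def prefixClosure {S : Type*} (L : Set (List S)) : Set (List S) :=
  {s₁ | ∃ s ∈ L, s₁ <+: s}

/-- `K` is controllable w.r.t. a plant with closed behavior `Lg` and
uncontrollable events `Su`: `\overline{K}·Su ∩ Lg ⊆ \overline{K}`. -/
def Controllable {S : Type*} (K Lg : Set (List S)) (Su : Set S) : Prop :=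
  {w | ∃ s ∈ prefixClosure K, ∃ σ ∈ Su, w = s ++ [σ]} ∩ Lg ⊆ prefixClosure K

/-- The family of controllable sublanguages of `L`. -/
def CtrlFamily {S : Type*} (L Lg : Set (List S)) (Su : Set S) : Set (Set (List S)) :=
  {K | K ⊆ L ∧ Controllable K Lg Su}

/-- The supremal controllable sublanguage of `L`. -/
def supC {S : Type*} (L Lg : Set (List S)) (Su : Set S) : Set (List S) :=
  ⋃₀ CtrlFamily L Lg Su

theorem sUnion_controllable_and_supC {S : Type*} (Lg : Set (List S)) (Su : Set S) :
    (∀ (F : Set (Set (List S))), (∀ K ∈ F, Controllable K Lg Su) →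
      Controllable (⋃₀ F) Lg Su) ∧
    (∀ L : Set (List S), supC L Lg Su ∈ CtrlFamily L Lg Su ∧
      ∀ K ∈ CtrlFamily L Lg Su, K ⊆ supC L Lg Su) := by
  have main : ∀ (F : Set (Set (List S))), (∀ K ∈ F, Controllable K Lg Su) →
      Controllable (⋃₀ F) Lg Su := by
    intro F hF w ⟨⟨s, hs, σ, hσ, hw⟩, hwg⟩
    obtain ⟨t, ⟨K, hKF, htK⟩, hst⟩ := hs
    obtain ⟨u, hu, hpre⟩ := hF K hKF ⟨⟨s, ⟨t, htK, hst⟩, σ, hσ, hw⟩, hwg⟩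
    exact ⟨u, ⟨K, hKF, hu⟩, hpre⟩
  refine ⟨main, fun L => ?_⟩
  refine ⟨⟨?_, ?_⟩, fun K hK w hw => ⟨K, hK, hw⟩⟩
  · exact Set.sUnion_subset fun K hK => hK.1
  · exact main _ fun K hK => hK.2
end

section
/- If L is prefix-closed, then sup C(L) is prefix-closed. -/
lemma subset_prefixClosure {S : Type*} (K : Set (List S)) : K ⊆ prefixClosure K :=
  fun s hs => ⟨s, hs, List.prefix_refl s⟩

lemma prefixClosure_mono {S : Type*} {K L : Set (List S)} (h : K ⊆ L) :
    prefixClosure K ⊆ prefixClosure L :=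
  fun s ⟨t, ht, hp⟩ => ⟨t, h ht, hp⟩

lemma prefixClosure_idem {S : Type*} (K : Set (List S)) :
    prefixClosure (prefixClosure K) = prefixClosure K := by
  apply Set.Subset.antisymm
  · rintro s ⟨t, ⟨u, hu, htu⟩, hst⟩
    exact ⟨u, hu, hst.trans htu⟩
  · exact subset_prefixClosure _

theorem supC_closed_of_closed {S : Type*} (L Lg : Set (List S)) (Su : Set S)
    (hL : prefixClosure L = L) :
    prefixClosure (supC L Lg Su) = supC L Lg Su := by
  apply Set.Subset.antisymm
  · rintro w ⟨s, ⟨K, ⟨hKL, hKc⟩, hsK⟩, hws⟩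
    refine ⟨prefixClosure K, ⟨?_, ?_⟩, s, hsK, hws⟩
    · calc prefixClosure K ⊆ prefixClosure L := prefixClosure_mono hKL
        _ = L := hL
    · unfold Controllable
      rw [prefixClosure_idem]
      exact hKc
  · exact subset_prefixClosure _
end

section
/- If a natural projection P : Σ* → Σ₀* is a natural observer for a language L_m ⊆ Σ*, and L_m is nonblocking in the sense that a generator's closed behavior L equals \overline{L_m}, then the abstraction is also nonblocking: P(L) = \overline{P(L_m)}. -/
/-- Natural projection onto the subalphabet `A`: erase events not in `A`. -/
def natProj {S : Type*} (A : Set S) [DecidablePred (· ∈ A)] (s : List S) : List S :=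
  s.filter (fun a => decide (a ∈ A))

/-- `natProj A` is a natural observer for `Lm`. -/
def NaturalObserver {S : Type*} (A : Set S) [DecidablePred (· ∈ A)]
    (Lm : Set (List S)) : Prop :=
  ∀ s ∈ prefixClosure Lm, ∀ t : List S, (∀ a ∈ t, a ∈ A) →
    natProj A s ++ t ∈ natProj A '' Lm →
    ∃ u : List S, s ++ u ∈ Lm ∧ natProj A (s ++ u) = natProj A s ++ t

lemma prefix_filter_exists {S : Type*} (p : S → Bool) :
    ∀ (s t : List S), t <+: s.filter p → ∃ s', s' <+: s ∧ s'.filter p = t := by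
  intro s
  induction s with
  | nil => intro t ht; simp at ht; exact ⟨[], by simp, by simp [ht]⟩
  | cons a s ih =>
    intro t ht
    by_cases hp : p a
    · rw [List.filter_cons_of_pos hp] at ht
      rcases t with _ | ⟨b, t₂⟩
      · exact ⟨[], by simp, by simp⟩
      · obtain ⟨hb, ht₂⟩ := List.cons_prefix_cons.mp ht
        obtain ⟨s₂, hs₂, hf⟩ := ih t₂ ht₂
        exact ⟨a :: s₂, List.cons_prefix_cons.mpr ⟨rfl, hs₂⟩,
          by rw [List.filter_cons_of_pos hp, hf, hb]⟩
    · rw [List.filter_cons_of_neg hp] at ht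
      obtain ⟨s₂, hs₂, hf⟩ := ih t ht
      exact ⟨a :: s₂, List.cons_prefix_cons.mpr ⟨rfl, hs₂⟩,
        by rw [List.filter_cons_of_neg hp, hf]⟩

theorem observer_abstraction_nonblocking {S : Type*} (A : Set S)
    [DecidablePred (· ∈ A)] (Lm L : Set (List S))
    (hobs : NaturalObserver A Lm) (hnb : L = prefixClosure Lm) :
    natProj A '' L = prefixClosure (natProj A '' Lm) := by
  subst hnb
  ext t
  constructor
  · rintro ⟨s, ⟨m, hm, hpre⟩, rfl⟩
    exact ⟨natProj A m, ⟨m, hm, rfl⟩, hpre.filter _⟩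
  · rintro ⟨_, ⟨m, hm, rfl⟩, hpre⟩
    obtain ⟨s', hs', hf⟩ := prefix_filter_exists _ m t hpre
    exact ⟨s', ⟨m, hm, hs'⟩, hf⟩
end
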